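/- arXiv:math/0703578 — 7 statements merged into one kernel-verified Lean document; each statement's English description precedes it below -/
import Mathlib

section
/- The elliptic curve E : Y² = X³ + A·X + B (with A, B ∈ ℤ and 4A³ + 27B² ≠ 0) has a rational point of order 3 if and only if there exist integers z₁, z₂ such that A = 27z₁⁴ + 6z₁z₂ and B = z₂² − 27z₁⁶. -/
/-- The elliptic curve `E : Y² = X³ + A·X + B` over `ℚ`, as an affine Weierstrass curve. -/
noncomputable def E (A B : ℤ) : WeierstrassCurve.Affine ℚ :=
  { a₁ := 0, a₂ := 0, a₃ := 0, a₄ := (A : ℚ), a₆ := (B : ℚ) }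

open WeierstrassCurve.Affine WeierstrassCurve.Affine.Point in
private lemma E_negY (A B : ℤ) (x y : ℚ) : (E A B).negY x y = -y := by
  simp [WeierstrassCurve.Affine.negY, E]

open WeierstrassCurve.Affine WeierstrassCurve.Affine.Point in
private lemma E_equation (A B : ℤ) (x y : ℚ) :
    (E A B).Equation x y ↔ y ^ 2 = x ^ 3 + A * x + B := by
  rw [WeierstrassCurve.Affine.equation_iff]; simp [E]

open WeierstrassCurve.Affine WeierstrassCurve.Affine.Point in
private lemma some_eq_some' {W : WeierstrassCurve.Affine ℚ} {x₁ y₁ x₂ y₂ : ℚ}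
    (h₁ : W.Nonsingular x₁ y₁) (h₂ : W.Nonsingular x₂ y₂) (hx : x₁ = x₂) (hy : y₁ = y₂) :
    Point.some _ _ h₁ = Point.some _ _ h₂ := by subst hx; subst hy; rfl

/-- A rational whose square is an integer is an integer. -/
private lemma den_one_of_sq_int (w : ℚ) (n : ℤ) (h : w ^ 2 = (n : ℚ)) : w.den = 1 := by
  have h1 : (w ^ 2).den = 1 := by rw [h]; exact Rat.den_intCast n
  rw [Rat.den_pow] at h1
  nlinarith [w.den_pos]

/-- A rational root of `243 X⁸ + 54A X⁴ + 36B X² - A²` is an integer. -/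
private lemma t_den_one (A B : ℤ) (t : ℚ)
    (key : 243 * t ^ 8 + 54 * (A:ℚ) * t ^ 4 + 36 * B * t ^ 2 - A ^ 2 = 0) : t.den = 1 := by
  set p : ℤ := t.num with hp
  set q : ℤ := (t.den : ℤ) with hqdef
  have hq0 : (q : ℚ) ≠ 0 := by
    rw [hqdef]; exact_mod_cast t.den_ne_zero
  have hpq : (p : ℚ) = t * q := by
    have h := Rat.num_div_den t
    rw [div_eq_iff (by exact_mod_cast t.den_ne_zero : ((t.den : ℚ) ≠ 0))] at h
    rw [hp, hqdef]; exact_mod_cast h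
  have hint : 243 * p ^ 8 + 54 * A * p ^ 4 * q ^ 4 + 36 * B * p ^ 2 * q ^ 6 - A ^ 2 * q ^ 8 = 0 := by
    have : ((243 * p ^ 8 + 54 * A * p ^ 4 * q ^ 4 + 36 * B * p ^ 2 * q ^ 6
        - A ^ 2 * q ^ 8 : ℤ) : ℚ) = 0 := by
      push_cast
      rw [hpq]
      linear_combination (q : ℚ) ^ 8 * key
    exact_mod_cast this
  have hgcd : Int.gcd p q = 1 := by
    have := t.reduced
    simpa [Int.gcd, hp, hqdef] using this
  have hcop : IsCoprime q p := (Int.isCoprime_iff_gcd_eq_one.mpr hgcd).symm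
  have hq243 : q ∣ 243 := by
    have h1 : q ∣ 243 * p ^ 8 :=
      ⟨A ^ 2 * q ^ 7 - 54 * A * p ^ 4 * q ^ 3 - 36 * B * p ^ 2 * q ^ 5, by linarith [hint]⟩
    exact (hcop.pow_right (n := 8)).dvd_of_dvd_mul_right h1
  by_contra hne
  have hq3 : (3 : ℤ) ∣ q := by
    have hd : t.den ∣ 243 := by
      rw [hqdef] at hq243; exact_mod_cast hq243
    have h35 : t.den ∣ 3 ^ 5 := by norm_num at hd ⊢; exact hd
    obtain ⟨k, hk, hqk⟩ := (Nat.dvd_prime_pow Nat.prime_three).mp h35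
    rcases Nat.eq_zero_or_pos k with h0 | h0
    · exact absurd (by rw [hqk, h0, pow_zero]) hne
    · rw [hqdef, hqk]
      exact_mod_cast dvd_pow_self 3 (by omega : k ≠ 0)
  obtain ⟨m, hm⟩ := hq3
  have h3p : (3 : ℤ) ∣ p := by
    have : p ^ 8 = 3 * (9 * A ^ 2 * m ^ 8 - 6 * A * p ^ 4 * m ^ 4 - 36 * B * p ^ 2 * m ^ 6) := by
      have h := hint
      rw [hm] at h
      ring_nf at h ⊢
      linarith
    have h38 : (3 : ℤ) ∣ p ^ 8 := ⟨_, this⟩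
    exact Int.Prime.dvd_pow' (by norm_num) h38
  have : (3 : ℤ) ∣ 1 := by
    rw [← Int.ofNat_one, ← hgcd]
    exact Int.dvd_coe_gcd h3p (hm ▸ Dvd.intro m rfl)
  norm_num at this

open WeierstrassCurve.Affine WeierstrassCurve.Affine.Point in
theorem order_three_iff (A B : ℤ) (hΔ : 4 * A ^ 3 + 27 * B ^ 2 ≠ 0) :
    (∃ P : (E A B).Point, addOrderOf P = 3) ↔
      ∃ z₁ z₂ : ℤ, A = 27 * z₁ ^ 4 + 6 * z₁ * z₂ ∧ B = z₂ ^ 2 - 27 * z₁ ^ 6 := by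
  constructor
  · -- reverse direction: a point of order 3 yields the parametrization
    rintro ⟨P, hP⟩
    cases P with
    | zero =>
      rw [show (Point.zero : (E A B).Point) = 0 from rfl, addOrderOf_zero] at hP
      norm_num at hP
    | @some x₀ y₀ h =>
      have hy0 : y₀ ≠ 0 := by
        intro h0
        have h2 : Point.some _ _ h + Point.some _ _ h = 0 :=
          add_of_Y_eq rfl (by rw [E_negY, h0, _root_.neg_zero])
        have : addOrderOf (Point.some _ _ h) ∣ 2 :=
          addOrderOf_dvd_of_nsmul_eq_zero (by rw [two_nsmul]; exact h2)
        rw [hP] at this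
        norm_num at this
      have hy' : y₀ ≠ (E A B).negY x₀ y₀ := by
        rw [E_negY]; intro hc; apply hy0; linarith
      have h3 : Point.some _ _ h + Point.some _ _ h + Point.some _ _ h = 0 := by
        have := addOrderOf_nsmul_eq_zero (Point.some _ _ h)
        rw [hP, show (3 : ℕ) = 2 + 1 from rfl, add_nsmul, two_nsmul, one_nsmul] at this
        exact this
      have hadd : Point.some _ _ h + Point.some _ _ h = -Point.some _ _ h :=
        eq_neg_of_add_eq_zero_left h3
      rw [add_self_of_Y_ne hy', neg_some] at hadd
      injection hadd with hX hY
      obtain ⟨l, hl⟩ : ∃ l : ℚ, l = (E A B).slope x₀ x₀ y₀ y₀ := ⟨_, rfl⟩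
      rw [← hl] at hX hY
      have hslope : l * (2 * y₀) = 3 * x₀ ^ 2 + A := by
        rw [hl, WeierstrassCurve.Affine.slope_of_Y_ne rfl hy', E_negY]
        have ha1 : (E A B).a₁ = 0 := rfl
        have ha2 : (E A B).a₂ = 0 := rfl
        have ha4 : (E A B).a₄ = (A : ℚ) := rfl
        rw [ha1, ha2, ha4, div_mul_eq_mul_div,
          div_eq_iff (by intro hc; apply hy0; linarith : y₀ - -y₀ ≠ 0)]
        ring
      have hX' : l ^ 2 = 3 * x₀ := by
        rw [WeierstrassCurve.Affine.addX] at hX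
        have ha1 : (E A B).a₁ = 0 := rfl
        have ha2 : (E A B).a₂ = 0 := rfl
        rw [ha1, ha2] at hX
        linarith
      obtain ⟨t, ht⟩ : ∃ t : ℚ, t = l / 3 := ⟨_, rfl⟩
      have hxt : x₀ = 3 * t ^ 2 := by rw [ht]; field_simp; linarith [hX']
      have hlt : l = 3 * t := by rw [ht]; field_simp
      have e1 : 6 * t * y₀ = 27 * t ^ 4 + A := by
        have := hslope
        rw [hlt, hxt] at this
        linarith [this]
      have e2 : y₀ ^ 2 = 27 * t ^ 6 + 3 * A * t ^ 2 + B := by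
        have heq := (E_equation A B x₀ y₀).mp h.1
        rw [hxt] at heq
        linarith [heq]
      have key : 243 * t ^ 8 + 54 * (A:ℚ) * t ^ 4 + 36 * B * t ^ 2 - A ^ 2 = 0 := by
        linear_combination (6 * t * y₀ + 27 * t ^ 4 + (A:ℚ)) * e1 - 36 * t ^ 2 * e2
      have hden := t_den_one A B t key
      obtain ⟨z₁, hz₁⟩ : ∃ z : ℤ, z = t.num := ⟨_, rfl⟩
      have htz : (z₁ : ℚ) = t := by rw [hz₁]; exact Rat.coe_int_num_of_den_eq_one hden
      obtain ⟨w, hw⟩ : ∃ w : ℚ, w = y₀ - 9 * t ^ 3 := ⟨_, rfl⟩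
      have e3 : w ^ 2 = B + 27 * t ^ 6 := by
        rw [hw]; linear_combination e2 - 3 * t ^ 2 * e1
      have hwden : w.den = 1 := by
        apply den_one_of_sq_int w (B + 27 * z₁ ^ 6)
        rw [e3]; push_cast; rw [htz]
      obtain ⟨z₂, hz₂⟩ : ∃ z : ℤ, z = w.num := ⟨_, rfl⟩
      have hwz : (z₂ : ℚ) = w := by rw [hz₂]; exact Rat.coe_int_num_of_den_eq_one hwden
      refine ⟨z₁, z₂, ?_, ?_⟩
      · have : (A : ℚ) = 27 * (z₁:ℚ) ^ 4 + 6 * z₁ * z₂ := by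
          rw [htz, hwz, hw]; linear_combination -e1
        exact_mod_cast this
      · have : (B : ℚ) = (z₂:ℚ) ^ 2 - 27 * (z₁:ℚ) ^ 6 := by
          rw [htz, hwz]; linear_combination -e3
        exact_mod_cast this
  · -- forward direction: construct the point of order 3
    rintro ⟨z₁, z₂, hA, hB⟩
    set x₀ : ℚ := 3 * (z₁ : ℚ) ^ 2 with hx₀
    set y₀ : ℚ := 9 * (z₁ : ℚ) ^ 3 + (z₂ : ℚ) with hy₀
    have hy : y₀ ≠ 0 := by
      intro h0
      have hz : (z₂ : ℚ) = ((-9 * z₁ ^ 3 : ℤ) : ℚ) := by push_cast; linarith [h0]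
      have hz' : z₂ = -9 * z₁ ^ 3 := by exact_mod_cast hz
      apply hΔ
      rw [hA, hB, hz']; ring
    have heq : (E A B).Equation x₀ y₀ := by
      rw [E_equation, hx₀, hy₀, hA, hB]; push_cast; ring
    have hns : (E A B).Nonsingular x₀ y₀ := by
      refine (WeierstrassCurve.Affine.nonsingular_iff' _ _).mpr ⟨heq, Or.inr ?_⟩
      show (2 : ℚ) * y₀ + (E A B).a₁ * x₀ + (E A B).a₃ ≠ 0
      have ha1 : (E A B).a₁ = 0 := rfl
      have ha3 : (E A B).a₃ = 0 := rfl
      rw [ha1, ha3]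
      intro h; apply hy; linarith
    refine ⟨Point.some _ _ hns, ?_⟩
    haveI : Fact (Nat.Prime 3) := ⟨by norm_num⟩
    have hy' : y₀ ≠ (E A B).negY x₀ y₀ := by
      rw [E_negY]; intro h; apply hy; linarith
    have hslope : (E A B).slope x₀ x₀ y₀ y₀ = 3 * (z₁ : ℚ) := by
      rw [WeierstrassCurve.Affine.slope_of_Y_ne rfl hy', E_negY]
      have ha1 : (E A B).a₁ = 0 := rfl
      have ha2 : (E A B).a₂ = 0 := rfl
      have ha4 : (E A B).a₄ = (A : ℚ) := rfl
      rw [ha1, ha2, ha4, div_eq_iff (by intro h; apply hy; linarith : y₀ - -y₀ ≠ 0)]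
      rw [hx₀, hy₀, hA]; push_cast; ring
    have hadd : Point.some _ _ hns + Point.some _ _ hns = -Point.some _ _ hns := by
      rw [add_self_of_Y_ne' hy']
      refine congrArg Neg.neg (some_eq_some' _ _ ?_ ?_)
      · show (E A B).addX x₀ x₀ ((E A B).slope x₀ x₀ y₀ y₀) = x₀
        rw [WeierstrassCurve.Affine.addX, hslope]
        have ha1 : (E A B).a₁ = 0 := rfl
        have ha2 : (E A B).a₂ = 0 := rfl
        rw [ha1, ha2, hx₀]; ring
      · show (E A B).negAddY x₀ x₀ y₀ ((E A B).slope x₀ x₀ y₀ y₀) = y₀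
        rw [WeierstrassCurve.Affine.negAddY, WeierstrassCurve.Affine.addX, hslope]
        have ha1 : (E A B).a₁ = 0 := rfl
        have ha2 : (E A B).a₂ = 0 := rfl
        rw [ha1, ha2, hx₀]; ring
    have h3 : (3 : ℕ) • Point.some _ _ hns = 0 := by
      rw [show (3 : ℕ) = 2 + 1 from rfl, add_nsmul, two_nsmul, one_nsmul, hadd, neg_add_cancel]
    exact addOrderOf_eq_prime h3 (some_ne_zero hns)
end

section
/- Let z₁, z₂ be integers, let A = 27z₁⁴ + 6z₁z₂ and B = z₂² − 27z₁⁶, and assume 4A³ + 27B² ≠ 0. Then the point (3z₁², 9z₁³ + z₂) lies on the elliptic curve E : Y² = X³ + A·X + B and has order 3 in E(ℚ). -/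
open WeierstrassCurve.Affine

lemma some_congr {F : Type*} [Field F] {W : WeierstrassCurve.Affine F} {x₁ y₁ x₂ y₂ : F}
    (hx : x₁ = x₂) (hy : y₁ = y₂) (h₁ : W.Nonsingular x₁ y₁) (h₂ : W.Nonsingular x₂ y₂) :
    Point.some _ _ h₁ = Point.some _ _ h₂ := by
  subst hx; subst hy; rfl

theorem point_of_order_three (z₁ z₂ A B : ℤ)
    (hA : A = 27 * z₁ ^ 4 + 6 * z₁ * z₂) (hB : B = z₂ ^ 2 - 27 * z₁ ^ 6)
    (hΔ : 4 * A ^ 3 + 27 * B ^ 2 ≠ 0) :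
    ∃ h : (E A B).Nonsingular ((3 * z₁ ^ 2 : ℤ) : ℚ) ((9 * z₁ ^ 3 + z₂ : ℤ) : ℚ),
      addOrderOf (WeierstrassCurve.Affine.Point.some _ _ h) = 3 := by
  subst hA hB
  have heq : (E (27 * z₁ ^ 4 + 6 * z₁ * z₂) (z₂ ^ 2 - 27 * z₁ ^ 6)).Equation ((3 * z₁ ^ 2 : ℤ) : ℚ) ((9 * z₁ ^ 3 + z₂ : ℤ) : ℚ) := by
    rw [equation_iff]
    simp only [E]
    push_cast
    ring
  have hΔ' : (E (27 * z₁ ^ 4 + 6 * z₁ * z₂) (z₂ ^ 2 - 27 * z₁ ^ 6)).Δ ≠ 0 := by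
    have : (E (27 * z₁ ^ 4 + 6 * z₁ * z₂) (z₂ ^ 2 - 27 * z₁ ^ 6)).Δ =
        -16 * ((4 * (27 * z₁ ^ 4 + 6 * z₁ * z₂ : ℤ) ^ 3 + 27 * (z₂ ^ 2 - 27 * z₁ ^ 6 : ℤ) ^ 2 : ℤ) : ℚ) := by
      simp only [WeierstrassCurve.Δ, WeierstrassCurve.b₂, WeierstrassCurve.b₄,
        WeierstrassCurve.b₆, WeierstrassCurve.b₈, E]
      push_cast
      ring
    rw [this]
    intro h
    rcases mul_eq_zero.mp h with h | h
    · norm_num at h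
    · exact hΔ (by exact_mod_cast h)
  have h : (E (27 * z₁ ^ 4 + 6 * z₁ * z₂) (z₂ ^ 2 - 27 * z₁ ^ 6)).Nonsingular ((3 * z₁ ^ 2 : ℤ) : ℚ) ((9 * z₁ ^ 3 + z₂ : ℤ) : ℚ) :=
    (E (27 * z₁ ^ 4 + 6 * z₁ * z₂) (z₂ ^ 2 - 27 * z₁ ^ 6)).equation_iff_nonsingular_of_Δ_ne_zero hΔ' |>.mp heq
  refine ⟨h, ?_⟩
  -- the y-coordinate is nonzero
  have hy0 : ((9 * z₁ ^ 3 + z₂ : ℤ) : ℚ) ≠ 0 := by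
    intro h0
    have : (9 * z₁ ^ 3 + z₂ : ℤ) = 0 := by exact_mod_cast h0
    have hz : z₂ = -9 * z₁ ^ 3 := by linarith
    apply hΔ
    rw [hz]; ring
  have hy : ((9 * z₁ ^ 3 + z₂ : ℤ) : ℚ) ≠
      (E (27 * z₁ ^ 4 + 6 * z₁ * z₂) (z₂ ^ 2 - 27 * z₁ ^ 6)).negY ((3 * z₁ ^ 2 : ℤ) : ℚ) ((9 * z₁ ^ 3 + z₂ : ℤ) : ℚ) := by
    simp only [negY, E]
    intro hc
    apply hy0
    linarith [hc]
  -- the slope is 3z₁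
  have hslope : (E (27 * z₁ ^ 4 + 6 * z₁ * z₂) (z₂ ^ 2 - 27 * z₁ ^ 6)).slope ((3 * z₁ ^ 2 : ℤ) : ℚ) ((3 * z₁ ^ 2 : ℤ) : ℚ)
      ((9 * z₁ ^ 3 + z₂ : ℤ) : ℚ) ((9 * z₁ ^ 3 + z₂ : ℤ) : ℚ) = (3 * z₁ : ℤ) := by
    rw [slope_of_Y_ne rfl hy]
    simp only [negY, E]
    rw [div_eq_iff (by intro hc; apply hy0; push_cast at hc ⊢; linarith)]
    push_cast
    ring
  have hPP : Point.some _ _ h + Point.some _ _ h = -Point.some _ _ h := by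
    rw [Point.add_self_of_Y_ne hy, Point.neg_some]
    apply some_congr
    · rw [hslope]
      simp only [addX, E]
      push_cast
      ring
    · rw [hslope]
      simp only [addY, negAddY, addX, negY, E]
      push_cast
      ring
  have h3 : (3 : ℕ) • Point.some _ _ h = 0 := by
    rw [show (3 : ℕ) • Point.some _ _ h = Point.some _ _ h + Point.some _ _ h + Point.some _ _ h from by abel,
      hPP, neg_add_cancel]
  have hne : Point.some _ _ h ≠ 0 := by
    intro hc
    exact (Point.some_ne_zero h) hc
  haveI : Fact (Nat.Prime 3) := ⟨by norm_num⟩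
  exact addOrderOf_eq_prime h3 hne
end

section
/- Let E : Y² = X³ + A·X + B be an elliptic curve with A, B ∈ ℤ and 4A³ + 27B² ≠ 0. If (x, y) ∈ E(ℚ) is a point of order 3, then there exist integers z₁, z₂ such that x = 3z₁², y = 9z₁³ + z₂ or y = −(9z₁³ + z₂), A = 27z₁⁴ + 6z₁z₂, and B = z₂² − 27z₁⁶. -/
open WeierstrassCurve WeierstrassCurve.Affine

lemma int_of_octic (q : ℚ) (a b c : ℤ) (h : q ^ 8 = a * q ^ 4 + b * q ^ 2 + c) :
    ∃ z : ℤ, q = (z : ℚ) := by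
  have hd : ((q.den : ℤ) : ℚ) ≠ 0 := by exact_mod_cast q.den_ne_zero
  have hq : (q.num : ℚ) = q * ((q.den : ℤ) : ℚ) := by
    rw [← div_eq_iff hd]
    exact_mod_cast Rat.num_div_den q
  have key : q.num ^ 8 = a * q.num ^ 4 * (q.den : ℤ) ^ 4 + b * q.num ^ 2 * (q.den : ℤ) ^ 6
      + c * (q.den : ℤ) ^ 8 := by
    have : (q.num : ℚ) ^ 8 = (a : ℚ) * (q.num : ℚ) ^ 4 * ((q.den : ℤ) : ℚ) ^ 4
        + (b : ℚ) * (q.num : ℚ) ^ 2 * ((q.den : ℤ) : ℚ) ^ 6 + (c : ℚ) * ((q.den : ℤ) : ℚ) ^ 8 := by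
      rw [hq]; linear_combination (((q.den : ℤ) : ℚ)) ^ 8 * h
    exact_mod_cast this
  have hdvd : (q.den : ℤ) ∣ q.num ^ 8 :=
    ⟨a * q.num ^ 4 * (q.den : ℤ) ^ 3 + b * q.num ^ 2 * (q.den : ℤ) ^ 5 + c * (q.den : ℤ) ^ 7,
      by linear_combination key⟩
  have hdvd' : q.den ∣ q.num.natAbs ^ 8 := by
    have := Int.natAbs_dvd_natAbs.mpr hdvd
    simpa [Int.natAbs_pow] using this
  have hden : q.den = 1 := (Nat.Coprime.pow_right 8 q.reduced.symm).eq_one_of_dvd hdvd'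
  exact ⟨q.num, by rw [← Rat.num_div_den q, hden]; simp⟩

theorem order_three_coords (A B : ℤ) (hΔ : 4 * A ^ 3 + 27 * B ^ 2 ≠ 0)
    (x y : ℚ) (h : (E A B).Nonsingular x y)
    (hord : addOrderOf (WeierstrassCurve.Affine.Point.some x y h) = 3) :
    ∃ z₁ z₂ : ℤ, x = ((3 * z₁ ^ 2 : ℤ) : ℚ) ∧
      (y = ((9 * z₁ ^ 3 + z₂ : ℤ) : ℚ) ∨ y = -((9 * z₁ ^ 3 + z₂ : ℤ) : ℚ)) ∧
      A = 27 * z₁ ^ 4 + 6 * z₁ * z₂ ∧ B = z₂ ^ 2 - 27 * z₁ ^ 6 := by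
  set P := WeierstrassCurve.Affine.Point.some x y h with hP
  have h3 : 3 • P = 0 := by rw [← hord]; exact addOrderOf_nsmul_eq_zero P
  have hy : y ≠ (E A B).negY x y := by
    intro hy
    have h2 : P + P = 0 := Point.add_self_of_Y_eq hy
    have : addOrderOf P ∣ 2 := addOrderOf_dvd_of_nsmul_eq_zero (by rw [two_nsmul]; exact h2)
    rw [hord] at this; norm_num at this
  have hy0 : y ≠ 0 := by
    intro h0; apply hy; simp [E, negY, h0]
  have hPP : P + P = -P := by
    have h3' : P + P + P = 0 := by
      rw [show P + P + P = 3 • P by abel]; exact h3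
    exact eq_neg_of_add_eq_zero_left h3'
  have hsome : Point.some _ _ (nonsingular_negAdd h h fun h' => hy h'.2) = Point.some x y h := by
    have := Point.add_self_of_Y_ne' (h₁ := h) hy
    rw [hPP] at this
    exact neg_injective this.symm
  have hxeq : (E A B).addX x x ((E A B).slope x x y y) = x := by
    injection hsome
  have hsl : (E A B).slope x x y y = (3 * x ^ 2 + A) / (2 * y) := by
    rw [slope_of_Y_ne rfl hy]
    simp [E, negY]
    ring
  have hx3 : ((3 * x ^ 2 + A) / (2 * y)) ^ 2 = 3 * x := by
    rw [hsl] at hxeq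
    simp only [addX, E] at hxeq
    linear_combination hxeq
  have hE : y ^ 2 = x ^ 3 + A * x + B := by
    have he := h.1
    rw [WeierstrassCurve.Affine.equation_iff] at he
    simp only [E] at he
    linear_combination he
  -- the slope as a rational number
  set L : ℚ := (3 * x ^ 2 + A) / (2 * y) with hL
  have hy2 : (2 * y) ≠ 0 := by simpa using hy0
  have hl : L * (2 * y) = 3 * x ^ 2 + A := by
    rw [hL, div_mul_cancel₀ _ hy2]
  -- the quartic equation in x
  have h1 : (3 * x ^ 2 + A) ^ 2 = 12 * x * y ^ 2 := by
    rw [← hl]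
    linear_combination 4 * y ^ 2 * hx3
  have h2 : (A : ℚ) ^ 2 = 3 * x ^ 4 + 6 * A * x ^ 2 + 12 * B * x := by
    linear_combination h1 + 12 * x * hE
  -- the octic equation in L
  have hpoly : L ^ 8 = (-18 * A : ℤ) * L ^ 4 + (-108 * B : ℤ) * L ^ 2 + (27 * A ^ 2 : ℤ) := by
    push_cast
    linear_combination (L ^ 6 + 3 * x * L ^ 4 + 9 * x ^ 2 * L ^ 2 + 27 * x ^ 3 + 18 * A * L ^ 2
      + 54 * A * x + 108 * B) * hx3 - 27 * h2
  obtain ⟨m, hm⟩ := int_of_octic L _ _ _ hpoly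
  have hmint : m ^ 8 = -18 * A * m ^ 4 - 108 * B * m ^ 2 + 27 * A ^ 2 := by
    rw [hm] at hpoly
    push_cast at hpoly
    have h' : ((m ^ 8 : ℤ) : ℚ) = ((-18 * A * m ^ 4 - 108 * B * m ^ 2 + 27 * A ^ 2 : ℤ) : ℚ) := by
      push_cast
      linear_combination hpoly
    exact_mod_cast h'
  have h3m : (3 : ℤ) ∣ m := by
    have : (3 : ℤ) ∣ m ^ 8 :=
      ⟨-6 * A * m ^ 4 - 36 * B * m ^ 2 + 9 * A ^ 2, by linear_combination hmint⟩
    exact Int.Prime.dvd_pow' (by norm_num) this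
  obtain ⟨z₁, rfl⟩ := h3m
  have hxval : x = ((3 * z₁ ^ 2 : ℤ) : ℚ) := by
    rw [hm] at hx3
    push_cast at hx3 ⊢
    linear_combination (-1 / 3 : ℚ) * hx3
  -- y is an integer
  have hysq : y ^ 2 = ((27 * z₁ ^ 6 + 3 * A * z₁ ^ 2 + B : ℤ) : ℚ) := by
    rw [hE, hxval]; push_cast; ring
  set K : ℤ := 27 * z₁ ^ 6 + 3 * A * z₁ ^ 2 + B with hK
  obtain ⟨w, hw⟩ := int_of_octic y 0 0 (K ^ 4)
    (by rw [show ((K ^ 4 : ℤ) : ℚ) = ((K : ℤ) : ℚ) ^ 4 by push_cast; ring]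
        linear_combination (y ^ 6 + y ^ 4 * ((K : ℤ) : ℚ) + y ^ 2 * ((K : ℤ) : ℚ) ^ 2
          + ((K : ℤ) : ℚ) ^ 3) * hysq)
  -- the integer equations
  have haz : 6 * z₁ * w = 27 * z₁ ^ 4 + A := by
    have h1' : ((3 * z₁ : ℤ) : ℚ) * (2 * ((w : ℤ) : ℚ)) = 3 * ((3 * z₁ ^ 2 : ℤ) : ℚ) ^ 2 + A := by
      rw [← hm, ← hw, ← hxval]; exact hl
    have h2' : ((6 * z₁ * w : ℤ) : ℚ) = ((27 * z₁ ^ 4 + A : ℤ) : ℚ) := by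
      push_cast at h1' ⊢
      linear_combination h1'
    exact_mod_cast h2'
  have hbz : w ^ 2 = K := by
    have h1' := hysq
    rw [hw] at h1'
    exact_mod_cast h1'
  refine ⟨z₁, w - 9 * z₁ ^ 3, hxval, Or.inl (by rw [hw]; push_cast; ring), ?_, ?_⟩
  · linear_combination -haz
  · linear_combination -hbz - hK + 3 * z₁ ^ 2 * haz
end

section
/- The elliptic curve E : Y² = X³ + A·X + B (with A, B ∈ ℤ and 4A³ + 27B² ≠ 0) has a rational point of order 4 if and only if there exist integers z₁, z₂ such that A = −3z₁² + 6z₁z₂² − 2z₂⁴ and B = (2z₁ − z₂²)·(z₁² + 2z₁z₂² − z₂⁴). -/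
open WeierstrassCurve.Affine

lemma den_one_of_dvd (q : ℚ) (k : ℕ) (h : (q.den : ℤ) ∣ q.num ^ (k+1)) : ∃ n : ℤ, q = n := by
  refine ⟨q.num, ?_⟩
  have h2 : q.den ∣ q.num.natAbs ^ (k+1) := by
    have := Int.natAbs_dvd_natAbs.mpr h
    simpa [Int.natAbs_pow] using this
  have hcop : Nat.Coprime q.den (q.num.natAbs ^ (k+1)) := (q.reduced.pow_left _).symm
  have hd1 : q.den = 1 := Nat.Coprime.eq_one_of_dvd hcop h2
  exact_mod_cast (Rat.den_eq_one_iff q).mp hd1 |>.symm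

lemma cubic_int (a b : ℤ) (q : ℚ) (h : q ^ 3 + a * q + b = 0) : ∃ n : ℤ, q = n := by
  have hmul : q * (q.den : ℚ) = q.num := Rat.mul_den_eq_num q
  have h' : q.num ^ 3 + a * q.num * (q.den : ℤ) ^ 2 + b * (q.den : ℤ) ^ 3 = 0 := by
    have : (q.num : ℚ) ^ 3 + a * q.num * (q.den : ℚ) ^ 2 + b * (q.den : ℚ) ^ 3 = 0 := by
      linear_combination ((q.den : ℚ))^3 * h +
        (-((q.num : ℚ)^2 + q.num * q * q.den + q^2 * (q.den:ℚ)^2 + a * (q.den:ℚ)^2)) * hmul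
    exact_mod_cast this
  exact den_one_of_dvd q 2 ⟨-(a * q.num * (q.den : ℤ) + b * (q.den : ℤ) ^ 2), by linear_combination h'⟩

lemma sq_int (c : ℤ) (q : ℚ) (h : q ^ 2 = c) : ∃ n : ℤ, q = n := by
  have hmul : q * (q.den : ℚ) = q.num := Rat.mul_den_eq_num q
  have h' : q.num ^ 2 = c * (q.den : ℤ) ^ 2 := by
    have : (q.num : ℚ) ^ 2 = c * (q.den : ℚ) ^ 2 := by
      linear_combination ((q.den : ℚ))^2 * h + (-((q.num : ℚ) + q * q.den)) * hmul
    exact_mod_cast this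
  exact den_one_of_dvd q 1 ⟨c * (q.den : ℤ), by linear_combination h'⟩

theorem order_four_iff (A B : ℤ) (hΔ : 4 * A ^ 3 + 27 * B ^ 2 ≠ 0) :
    (∃ P : (E A B).Point, addOrderOf P = 4) ↔
      ∃ z₁ z₂ : ℤ, A = -3 * z₁ ^ 2 + 6 * z₁ * z₂ ^ 2 - 2 * z₂ ^ 4 ∧
        B = (2 * z₁ - z₂ ^ 2) * (z₁ ^ 2 + 2 * z₁ * z₂ ^ 2 - z₂ ^ 4) := by
  constructor
  · rintro ⟨P, hP⟩
    have h4 : (4 : ℕ) • P = 0 := by rw [← hP]; exact addOrderOf_nsmul_eq_zero P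
    have h2ne : (2 : ℕ) • P ≠ 0 := by
      intro h
      have := addOrderOf_dvd_of_nsmul_eq_zero h
      rw [hP] at this
      norm_num at this
    have h1ne : P ≠ 0 := by
      intro h
      rw [h] at hP
      simp at hP
    obtain _ | @⟨x, y, hxy⟩ := P
    · exact absurd Point.zero_def h1ne
    · -- the order-4 point (x, y)
      have hy_ne : y ≠ (E A B).negY x y := fun h =>
        h2ne (by rw [two_nsmul]; exact Point.add_self_of_Y_eq h)
      have hy0 : y ≠ 0 := fun h => hy_ne (by simp [WeierstrassCurve.Affine.negY, E, h])
      have h2P : (2 : ℕ) • Point.some _ _ hxy =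
          Point.some _ _ (nonsingular_add hxy hxy fun h => hy_ne h.2) := by
        rw [two_nsmul]; exact Point.add_self_of_Y_ne hy_ne
      have hQQ : Point.some _ _ (nonsingular_add hxy hxy fun h => hy_ne h.2) +
          Point.some _ _ (nonsingular_add hxy hxy fun h => hy_ne h.2) = 0 := by
        rw [← h2P, ← two_nsmul, ← mul_nsmul]
        norm_num
        exact h4
      obtain ⟨L, hLdef⟩ : ∃ l, l = (E A B).slope x x y y := ⟨_, rfl⟩
      obtain ⟨e, hedef⟩ : ∃ l : ℚ, l = L ^ 2 - 2 * x := ⟨_, rfl⟩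
      have ha₁ : (E A B).a₁ = 0 := rfl
      have ha₂ : (E A B).a₂ = 0 := rfl
      have ha₃ : (E A B).a₃ = 0 := rfl
      have ha₄ : (E A B).a₄ = (A : ℚ) := rfl
      have ha₆ : (E A B).a₆ = (B : ℚ) := rfl
      have hXcoord : (E A B).addX x x ((E A B).slope x x y y) = e := by
        rw [hedef, hLdef]
        simp only [WeierstrassCurve.Affine.addX, ha₁, ha₂]
        ring
      have hYcoord : (E A B).addY x x y ((E A B).slope x x y y) = -(L * (e - x) + y) := by
        rw [hedef, hLdef]
        simp only [WeierstrassCurve.Affine.addY, WeierstrassCurve.Affine.negAddY,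
          WeierstrassCurve.Affine.addX, WeierstrassCurve.Affine.negY, ha₁, ha₂, ha₃]
        ring
      have hy'0 : -(L * (e - x) + y) = 0 := by
        by_contra hne
        have hne' : (E A B).addY x x y ((E A B).slope x x y y) ≠
            (E A B).negY ((E A B).addX x x ((E A B).slope x x y y))
              ((E A B).addY x x y ((E A B).slope x x y y)) := by
          rw [hYcoord]
          simp only [WeierstrassCurve.Affine.negY, ha₁, ha₃]
          intro hc
          apply hne
          linarith [hc]
        rw [Point.add_self_of_Y_ne hne'] at hQQ
        exact Point.some_ne_zero _ hQQ
      -- curve equations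
      have heq : y ^ 2 = x ^ 3 + A * x + B := by
        have h := ((nonsingular_iff (W := E A B) x y).mp hxy).1
        rw [equation_iff] at h
        rw [ha₁, ha₂, ha₃, ha₄, ha₆] at h
        linear_combination h
      have hcubic : e ^ 3 + (A : ℚ) * e + B = 0 := by
        have h := ((nonsingular_iff (W := E A B) _ _).mp
          (nonsingular_add hxy hxy fun h => hy_ne h.2)).1
        rw [equation_iff] at h
        rw [hXcoord, hYcoord, hy'0, ha₁, ha₂, ha₃, ha₄, ha₆] at h
        linear_combination -h
      have hy_st : y = L * (x - e) := by linear_combination -hy'0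
      have hs2 : L ^ 2 = 3 * e + 2 * (x - e) := by linear_combination -hedef
      have ht0 : x - e ≠ 0 := fun h => hy0 (by rw [hy_st, h, mul_zero])
      have ht2 : (x - e) ^ 2 = 3 * e ^ 2 + A := by
        have key : (x - e) * ((x - e) ^ 2 - (3 * e ^ 2 + A)) = 0 := by
          linear_combination heq - (y + L * (x - e)) * hy_st - (x - e) ^ 2 * hs2 + hcubic
        rcases mul_eq_zero.mp key with h | h
        · exact absurd h ht0
        · linarith [h]
      obtain ⟨n, hn⟩ := cubic_int A B e hcubic
      obtain ⟨m, hm⟩ := sq_int (3 * n ^ 2 + A) (x - e) (by rw [ht2, hn]; push_cast; ring)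
      obtain ⟨k, hk⟩ := sq_int (3 * n + 2 * m) L
        (by rw [hs2, hm, hn]; push_cast; ring)
      have hm2 : m ^ 2 = 3 * n ^ 2 + A := by
        have h := ht2; rw [hm, hn] at h; exact_mod_cast h
      have hk2 : k ^ 2 = 3 * n + 2 * m := by
        have h := hs2
        rw [hm, hn, hk] at h
        have h' : (k : ℚ) ^ 2 = 3 * (n : ℚ) + 2 * m := by linear_combination h
        exact_mod_cast h'
      have hcubZ : n ^ 3 + A * n + B = 0 := by
        have h := hcubic; rw [hn] at h; exact_mod_cast h
      refine ⟨n + m, k, ?_, ?_⟩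
      · rw [show (k : ℤ) ^ 4 = (k ^ 2) ^ 2 by ring, hk2]
        linear_combination -hm2
      · rw [show (k : ℤ) ^ 4 = (k ^ 2) ^ 2 by ring, hk2]
        linear_combination hcubZ + n * hm2
  · rintro ⟨z₁, z₂, hA, hB⟩
    have key : 4 * A ^ 3 + 27 * B ^ 2
        = -(3 * z₁ - z₂ ^ 2) ^ 4 * z₂ ^ 2 * (5 * z₂ ^ 2 - 12 * z₁) := by
      rw [hA, hB]; ring
    have hz₂ : z₂ ≠ 0 := fun h => hΔ (by rw [key, h]; ring)
    have ht : 3 * z₁ - z₂ ^ 2 ≠ 0 := fun h => hΔ (by rw [key, h]; ring)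
    have hAq : (A : ℚ) = -3 * (z₁ : ℚ) ^ 2 + 6 * z₁ * z₂ ^ 2 - 2 * z₂ ^ 4 := by
      exact_mod_cast congrArg (Int.cast : ℤ → ℚ) hA
    have hBq : (B : ℚ) = (2 * (z₁ : ℚ) - z₂ ^ 2) * (z₁ ^ 2 + 2 * z₁ * z₂ ^ 2 - z₂ ^ 4) := by
      exact_mod_cast congrArg (Int.cast : ℤ → ℚ) hB
    have ha₁ : (E A B).a₁ = 0 := rfl
    have ha₂ : (E A B).a₂ = 0 := rfl
    have ha₃ : (E A B).a₃ = 0 := rfl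
    have ha₄ : (E A B).a₄ = (A : ℚ) := rfl
    have ha₆ : (E A B).a₆ = (B : ℚ) := rfl
    obtain ⟨y, hydef⟩ : ∃ yy : ℚ, yy = (((3 * z₁ - z₂ ^ 2) * z₂ : ℤ) : ℚ) := ⟨_, rfl⟩
    have hy0 : y ≠ 0 := by
      rw [hydef]
      exact_mod_cast mul_ne_zero ht hz₂
    have hPns : (E A B).Nonsingular (z₁ : ℚ) y := by
      rw [nonsingular_iff, equation_iff, ha₁, ha₂, ha₃, ha₄, ha₆]
      constructor
      · rw [hydef, hAq, hBq]; push_cast; ring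
      · right
        intro hc
        apply hy0
        linarith [hc]
    have hy_ne : y ≠ (E A B).negY (z₁ : ℚ) y := by
      simp only [WeierstrassCurve.Affine.negY, ha₁, ha₃]
      intro hc
      apply hy0
      linarith [hc]
    have h2P : (2 : ℕ) • Point.some _ _ hPns =
        Point.some _ _ (nonsingular_add hPns hPns fun h => hy_ne h.2) := by
      rw [two_nsmul]; exact Point.add_self_of_Y_ne hy_ne
    have hL : (E A B).slope (z₁ : ℚ) (z₁ : ℚ) y y = (z₂ : ℚ) := by
      rw [slope_of_Y_ne rfl hy_ne]
      rw [div_eq_iff (sub_ne_zero_of_ne hy_ne)]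
      simp only [WeierstrassCurve.Affine.negY, ha₁, ha₂, ha₃, ha₄]
      rw [hydef, hAq]
      push_cast
      ring
    have hy' : (E A B).addY (z₁ : ℚ) (z₁ : ℚ) y ((E A B).slope (z₁ : ℚ) (z₁ : ℚ) y y) = 0 := by
      rw [hL]
      simp only [WeierstrassCurve.Affine.addY, WeierstrassCurve.Affine.negAddY,
        WeierstrassCurve.Affine.addX, WeierstrassCurve.Affine.negY, ha₁, ha₂, ha₃]
      rw [hydef]
      push_cast
      ring
    have hyeq : (E A B).addY (z₁ : ℚ) (z₁ : ℚ) y ((E A B).slope (z₁ : ℚ) (z₁ : ℚ) y y) =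
        (E A B).negY ((E A B).addX (z₁ : ℚ) (z₁ : ℚ) ((E A B).slope (z₁ : ℚ) (z₁ : ℚ) y y))
          ((E A B).addY (z₁ : ℚ) (z₁ : ℚ) y ((E A B).slope (z₁ : ℚ) (z₁ : ℚ) y y)) := by
      rw [hy']
      simp [WeierstrassCurve.Affine.negY, ha₁, ha₃]
    have h4 : (2 : ℕ) ^ 2 • Point.some _ _ hPns = 0 := by
      rw [pow_two, mul_nsmul, h2P, two_nsmul]
      exact Point.add_self_of_Y_eq hyeq
    have h2ne : ¬ (2 : ℕ) ^ 1 • Point.some _ _ hPns = 0 := by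
      rw [pow_one, h2P]
      exact Point.some_ne_zero _
    have hord := addOrderOf_eq_prime_pow (p := 2) (n := 1) h2ne h4
    exact ⟨Point.some _ _ hPns, by norm_num at hord; exact hord⟩
end

section
/- Let x₁, x₂, x₃ be integers with 2x₃² = 3x₁ − x₂, x₂ ≠ 3x₁ and x₂ ≠ −3x₁, and suppose A and B are integers with 2A = 3x₁² − x₂² and 8B = (x₂ + x₁)·(7x₁² + 2x₁x₂ − x₂²), and 4A³ + 27B² ≠ 0. Then the point (x₁, x₃(3x₁ + x₂)/2) lies on the elliptic curve E : Y² = X³ + A·X + B and has order 4 in E(ℚ). -/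
open WeierstrassCurve.Affine

theorem point_of_order_four (x₁ x₂ x₃ A B : ℤ)
    (hx₃ : 2 * x₃ ^ 2 = 3 * x₁ - x₂) (h1 : x₂ ≠ 3 * x₁) (h2 : x₂ ≠ -3 * x₁)
    (hA : 2 * A = 3 * x₁ ^ 2 - x₂ ^ 2)
    (hB : 8 * B = (x₂ + x₁) * (7 * x₁ ^ 2 + 2 * x₁ * x₂ - x₂ ^ 2))
    (hΔ : 4 * A ^ 3 + 27 * B ^ 2 ≠ 0) :
    ∃ h : (E A B).Nonsingular ((x₁ : ℤ) : ℚ) (((x₃ * (3 * x₁ + x₂) : ℤ) : ℚ) / 2),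
      addOrderOf (WeierstrassCurve.Affine.Point.some _ _ h) = 4 := by
  have hx₃' : (2 : ℚ) * (x₃ : ℚ) ^ 2 = 3 * x₁ - x₂ := by exact_mod_cast congrArg (Int.cast : ℤ → ℚ) hx₃
  have hA' : (2 : ℚ) * (A : ℚ) = 3 * (x₁ : ℚ) ^ 2 - (x₂ : ℚ) ^ 2 := by exact_mod_cast congrArg (Int.cast : ℤ → ℚ) hA
  have hB' : (8 : ℚ) * (B : ℚ) = ((x₂ : ℚ) + x₁) * (7 * (x₁ : ℚ) ^ 2 + 2 * x₁ * x₂ - x₂ ^ 2) := by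
    exact_mod_cast congrArg (Int.cast : ℤ → ℚ) hB
  have hx3 : (x₃ : ℚ) ≠ 0 := by
    intro h
    apply h1
    have : (x₂ : ℚ) = 3 * x₁ := by linear_combination hx₃' - 2 * (x₃ : ℚ) * h
    exact_mod_cast this
  have hsum : (3 * (x₁ : ℚ) + x₂) ≠ 0 := by
    intro h
    apply h2
    have : (x₂ : ℚ) = -3 * x₁ := by linear_combination h
    exact_mod_cast this
  set Y : ℚ := ((x₃ * (3 * x₁ + x₂) : ℤ) : ℚ) / 2 with hYdef
  have hYval : Y = (x₃ : ℚ) * (3 * x₁ + x₂) / 2 := by push_cast [hYdef]; ring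
  have hY : Y ≠ 0 := by
    rw [hYval]
    positivity
  have heq : (E A B).Equation ((x₁ : ℤ) : ℚ) Y := by
    rw [WeierstrassCurve.Affine.equation_iff]
    simp only [E, hYval]
    linear_combination (-(x₁ : ℚ) / 2) * hA' + (-1 / 8) * hB' + ((3 * (x₁:ℚ) + x₂) ^ 2 / 8) * hx₃'
  have hYne : Y ≠ (E A B).negY ((x₁ : ℤ) : ℚ) Y := by
    simp only [WeierstrassCurve.Affine.negY, E]
    intro h
    apply hY
    linarith [h]
  have hns : (E A B).Nonsingular ((x₁ : ℤ) : ℚ) Y := by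
    rw [WeierstrassCurve.Affine.nonsingular_iff]
    refine ⟨heq, Or.inr ?_⟩
    simpa only [E, WeierstrassCurve.Affine.negY] using hYne
  refine ⟨hns, ?_⟩
  set P := WeierstrassCurve.Affine.Point.some _ _ hns with hP
  have hslope : (E A B).slope ((x₁ : ℤ) : ℚ) ((x₁ : ℤ) : ℚ) Y Y = (x₃ : ℚ) := by
    rw [WeierstrassCurve.Affine.slope_of_Y_ne rfl hYne]
    simp only [E, WeierstrassCurve.Affine.negY, hYval]
    field_simp
    ring_nf
    linear_combination (-(3 * (x₁:ℚ) + x₂)) * hx₃' + hA'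
  have hadd : P + P = WeierstrassCurve.Affine.Point.some _ _
      (WeierstrassCurve.Affine.nonsingular_add hns hns fun hxy => hYne hxy.right) :=
    WeierstrassCurve.Affine.Point.add_self_of_Y_ne hYne
  -- the doubled point has y-coordinate equal to its own negation
  have hkey : (E A B).addY ((x₁ : ℤ) : ℚ) ((x₁ : ℤ) : ℚ) Y
        ((E A B).slope ((x₁ : ℤ) : ℚ) ((x₁ : ℤ) : ℚ) Y Y)
      = (E A B).negY ((E A B).addX ((x₁ : ℤ) : ℚ) ((x₁ : ℤ) : ℚ)
          ((E A B).slope ((x₁ : ℤ) : ℚ) ((x₁ : ℤ) : ℚ) Y Y))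
        ((E A B).addY ((x₁ : ℤ) : ℚ) ((x₁ : ℤ) : ℚ) Y
          ((E A B).slope ((x₁ : ℤ) : ℚ) ((x₁ : ℤ) : ℚ) Y Y)) := by
    rw [hslope]
    simp only [WeierstrassCurve.Affine.addY, WeierstrassCurve.Affine.negAddY,
      WeierstrassCurve.Affine.addX, WeierstrassCurve.Affine.negY, E, hYval]
    linear_combination (-(x₃ : ℚ)) * hx₃'
  have h4 : P + P + (P + P) = 0 := by
    rw [hadd]
    exact WeierstrassCurve.Affine.Point.add_self_of_Y_eq hkey
  have h2ne : P + P ≠ 0 := by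
    rw [hadd]
    exact WeierstrassCurve.Affine.Point.some_ne_zero _
  have : addOrderOf P = 2 ^ (1 + 1) := by
    refine addOrderOf_eq_prime_pow (p := 2) (n := 1) ?_ ?_
    · simpa [pow_one, two_nsmul] using h2ne
    · show 2 ^ 2 • P = 0
      have : (2 ^ 2 : ℕ) • P = P + P + (P + P) := by
        rw [show (2^2 : ℕ) = 2 + 2 by norm_num, add_nsmul, two_nsmul]
      rw [this, h4]
  simpa using this
end

section
/- Let E : Y² = X³ + A·X + B be an elliptic curve with A, B ∈ ℤ and 4A³ + 27B² ≠ 0, let P = (x₁, w₁) ∈ E(ℚ) be a point of order 5, and let (x₂, w₂) = [2]P. Then there exists an integer c such that c² = (2x₁ + x₂)·(x₁ + 2x₂). -/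
private lemma nat_sq_dvd_15 {d : ℕ} (h : d ^ 2 ∣ 15) : d = 1 := by
  have hle : d ^ 2 ≤ 15 := Nat.le_of_dvd (by norm_num) h
  have hd3 : d ≤ 3 := by nlinarith
  interval_cases d <;> first | rfl | (exfalso; norm_num at h)

set_option maxHeartbeats 1600000 in
/-- If `x, y` satisfy the two "x-coordinate doubling" relations of a 5-torsion
configuration, then `x` is an integer (denominator 1). -/
private lemma den_eq_one_aux (A B : ℤ) (x y : ℚ)
    (h1 : (3*x^2+(A:ℚ))^2 = 4*(2*x+y)*(x^3+(A:ℚ)*x+(B:ℚ)))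
    (h2 : (3*y^2+(A:ℚ))^2 = 4*(x+2*y)*(y^3+(A:ℚ)*y+(B:ℚ))) : x.den = 1 := by
  have key : (15:ℚ) * x^16 = - 216*x^14*(A:ℚ) - 1200*x^13*(B:ℚ) - 52*x^12*(A:ℚ)^2 - 3744*x^11*(A:ℚ)*(B:ℚ) + 1592*x^10*(A:ℚ)^3 - 3840*x^10*(B:ℚ)^2 + 2288*x^9*(A:ℚ)^2*(B:ℚ) + 2070*x^8*(A:ℚ)^4 + 4320*x^8*(A:ℚ)*(B:ℚ)^2 + 8256*x^7*(A:ℚ)^3*(B:ℚ) + 7680*x^7*(B:ℚ)^3 + 600*x^6*(A:ℚ)^5 + 20352*x^6*(A:ℚ)^2*(B:ℚ)^2 + 1584*x^5*(A:ℚ)^4*(B:ℚ) + 34560*x^5*(A:ℚ)*(B:ℚ)^3 + 172*x^4*(A:ℚ)^6 + 576*x^4*(A:ℚ)^3*(B:ℚ)^2 + 19968*x^4*(B:ℚ)^4 + 1120*x^3*(A:ℚ)^5*(B:ℚ) + 5120*x^3*(A:ℚ)^2*(B:ℚ)^3 - 56*x^2*(A:ℚ)^7 + 1152*x^2*(A:ℚ)^4*(B:ℚ)^2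 + 9216*x^2*(A:ℚ)*(B:ℚ)^4 - 112*x*(A:ℚ)^6*(B:ℚ) - 256*x*(A:ℚ)^3*(B:ℚ)^3 + 3072*x*(B:ℚ)^5 + (A:ℚ)^8 - 32*(A:ℚ)^5*(B:ℚ)^2 - 256*(A:ℚ)^2*(B:ℚ)^4 := by
    linear_combination (15*x^12 + 60*x^11*y + 240*x^10*y^2 + 246*x^10*(A:ℚ) - 64*x^9*y^3 + 140*x^9*y*(A:ℚ) + 296*x^9*(B:ℚ) + 768*x^8*y^2*(A:ℚ) - 324*x^8*y*(B:ℚ) + 785*x^8*(A:ℚ)^2 - 192*x^7*y^3*(A:ℚ) + 864*x^7*y^2*(B:ℚ) + 248*x^7*y*(A:ℚ)^2 + 2208*x^7*(A:ℚ)*(B:ℚ) - 192*x^6*y^3*(B:ℚ) + 800*x^6*y^2*(A:ℚ)^2 - 816*x^6*y*(A:ℚ)*(B:ℚ) + 756*x^6*(A:ℚ)^3 + 2112*x^6*(B:ℚ)^2 - 192*x^5*y^3*(A:ℚ)^2 + 1824*x^5*y^2*(A:ℚ)*(B:ℚ) + 376*x^5*y*(A:ℚ)^3 - 1152*x^5*y*(B:ℚ)^2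 + 2992*x^5*(A:ℚ)^2*(B:ℚ) - 384*x^4*y^3*(A:ℚ)*(B:ℚ) + 256*x^4*y^2*(A:ℚ)^3 + 1008*x^4*y^2*(B:ℚ)^2 + 40*x^4*y*(A:ℚ)^2*(B:ℚ) + 193*x^4*(A:ℚ)^4 + 5280*x^4*(A:ℚ)*(B:ℚ)^2 - 64*x^3*y^3*(A:ℚ)^3 - 192*x^3*y^3*(B:ℚ)^2 + 928*x^3*y^2*(A:ℚ)^2*(B:ℚ) + 204*x^3*y*(A:ℚ)^4 - 1152*x^3*y*(A:ℚ)*(B:ℚ)^2 + 544*x^3*(A:ℚ)^3*(B:ℚ) + 3072*x^3*(B:ℚ)^3 - 192*x^2*y^3*(A:ℚ)^2*(B:ℚ) - 16*x^2*y^2*(A:ℚ)^4 + 1056*x^2*y^2*(A:ℚ)*(B:ℚ)^2 + 592*x^2*y*(A:ℚ)^3*(B:ℚ) - 768*x^2*y*(B:ℚ)^3 + 54*x^2*(A:ℚ)^5 + 1280*x^2*(A:ℚ)^2*(B:ℚ)^2 - 192*x*y^3*(A:ℚ)*(B:ℚ)^2 - 32*x*y^2*(A:ℚ)^3*(B:ℚ)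 + 384*x*y^2*(B:ℚ)^3 - 4*x*y*(A:ℚ)^5 + 512*x*y*(A:ℚ)^2*(B:ℚ)^2 + 104*x*(A:ℚ)^4*(B:ℚ) + 1536*x*(A:ℚ)*(B:ℚ)^3 - 64*y^3*(B:ℚ)^3 - 16*y^2*(A:ℚ)^2*(B:ℚ)^2 - 4*y*(A:ℚ)^4*(B:ℚ) + 128*y*(A:ℚ)*(B:ℚ)^3 - (A:ℚ)^6 + 32*(A:ℚ)^3*(B:ℚ)^2 + 512*(B:ℚ)^4) * h1 - 256*(x^3+(A:ℚ)*x+(B:ℚ))^4 * h2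
  have hd0 : ((x.den:ℚ)) ≠ 0 := Nat.cast_ne_zero.mpr x.den_nz
  have hn : (x.num:ℚ) = x * (x.den:ℚ) := (div_eq_iff hd0).mp (Rat.num_div_den x)
  set n := x.num with hndef
  set d := x.den with hddef
  have hZ : 15 * n^16 = (d:ℤ)^2 * (- 216*n^14*A - 1200*n^13*(d:ℤ)*B - 52*n^12*(d:ℤ)^2*A^2 - 3744*n^11*(d:ℤ)^3*A*B + 1592*n^10*(d:ℤ)^4*A^3 - 3840*n^10*(d:ℤ)^4*B^2 + 2288*n^9*(d:ℤ)^5*A^2*B + 2070*n^8*(d:ℤ)^6*A^4 + 4320*n^8*(d:ℤ)^6*A*B^2 + 8256*n^7*(d:ℤ)^7*A^3*B + 7680*n^7*(d:ℤ)^7*B^3 + 600*n^6*(d:ℤ)^8*A^5 + 20352*n^6*(d:ℤ)^8*A^2*B^2 + 1584*n^5*(d:ℤ)^9*A^4*B + 34560*n^5*(d:ℤ)^9*A*B^3 + 172*n^4*(d:ℤ)^10*A^6 + 576*n^4*(d:ℤ)^10*A^3*B^2 + 19968*n^4*(d:ℤ)^10*B^4 + 1120*n^3*(d:ℤ)^11*A^5*B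 + 5120*n^3*(d:ℤ)^11*A^2*B^3 - 56*n^2*(d:ℤ)^12*A^7 + 1152*n^2*(d:ℤ)^12*A^4*B^2 + 9216*n^2*(d:ℤ)^12*A*B^4 - 112*n*(d:ℤ)^13*A^6*B - 256*n*(d:ℤ)^13*A^3*B^3 + 3072*n*(d:ℤ)^13*B^5 + (d:ℤ)^14*A^8 - 32*(d:ℤ)^14*A^5*B^2 - 256*(d:ℤ)^14*A^2*B^4) := by
    have hQ : ((15 * n^16 : ℤ) : ℚ) = (((d:ℤ)^2 * (- 216*n^14*A - 1200*n^13*(d:ℤ)*B - 52*n^12*(d:ℤ)^2*A^2 - 3744*n^11*(d:ℤ)^3*A*B + 1592*n^10*(d:ℤ)^4*A^3 - 3840*n^10*(d:ℤ)^4*B^2 + 2288*n^9*(d:ℤ)^5*A^2*B + 2070*n^8*(d:ℤ)^6*A^4 + 4320*n^8*(d:ℤ)^6*A*B^2 + 8256*n^7*(d:ℤ)^7*A^3*B + 7680*n^7*(d:ℤ)^7*B^3 + 600*n^6*(d:ℤ)^8*A^5 + 20352*n^6*(d:ℤ)^8*A^2*B^2 + 1584*n^5*(d:ℤ)^9*A^4*B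 + 34560*n^5*(d:ℤ)^9*A*B^3 + 172*n^4*(d:ℤ)^10*A^6 + 576*n^4*(d:ℤ)^10*A^3*B^2 + 19968*n^4*(d:ℤ)^10*B^4 + 1120*n^3*(d:ℤ)^11*A^5*B + 5120*n^3*(d:ℤ)^11*A^2*B^3 - 56*n^2*(d:ℤ)^12*A^7 + 1152*n^2*(d:ℤ)^12*A^4*B^2 + 9216*n^2*(d:ℤ)^12*A*B^4 - 112*n*(d:ℤ)^13*A^6*B - 256*n*(d:ℤ)^13*A^3*B^3 + 3072*n*(d:ℤ)^13*B^5 + (d:ℤ)^14*A^8 - 32*(d:ℤ)^14*A^5*B^2 - 256*(d:ℤ)^14*A^2*B^4) : ℤ) : ℚ) := by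
      push_cast
      rw [hn]
      linear_combination ((d:ℚ))^16 * key
    exact_mod_cast hQ
  have hdvd : (d:ℤ)^2 ∣ 15 * n^16 := Dvd.intro _ hZ.symm
  have hcop : IsCoprime ((d:ℤ)) n := by
    rw [Int.isCoprime_iff_gcd_eq_one, Int.gcd, Int.natAbs_natCast]
    exact Nat.coprime_comm.mp x.reduced
  have h15 : (d:ℤ)^2 ∣ 15 := (hcop.pow (m := 2) (n := 16)).dvd_of_dvd_mul_right hdvd
  have h15' : d^2 ∣ 15 := by exact_mod_cast h15
  exact nat_sq_dvd_15 h15'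

/-- A rational whose square is an integer is itself an integer. -/
private lemma num_cast_of_sq_int (s : ℚ) (m : ℤ) (h : s^2 = (m:ℚ)) : ((s.num:ℚ)) = s := by
  have hd0 : ((s.den:ℚ)) ≠ 0 := Nat.cast_ne_zero.mpr s.den_nz
  have hn : (s.num:ℚ) = s * (s.den:ℚ) := (div_eq_iff hd0).mp (Rat.num_div_den s)
  have hZ : s.num^2 = m * (s.den:ℤ)^2 := by
    have : ((s.num^2 : ℤ):ℚ) = ((m * (s.den:ℤ)^2 : ℤ):ℚ) := by
      push_cast
      rw [hn]
      linear_combination ((s.den:ℚ))^2 * h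
    exact_mod_cast this
  have hdvd : (s.den:ℤ)^2 ∣ s.num^2 := ⟨m, by linarith⟩
  have hdvdN : s.den^2 ∣ s.num.natAbs^2 := by
    have := Int.natAbs_dvd_natAbs.mpr hdvd
    simpa [Int.natAbs_pow] using this
  have hcop : Nat.Coprime (s.den^2) (s.num.natAbs^2) := Nat.Coprime.pow _ _ s.reduced.symm
  have hone : s.den^2 = 1 := hcop.eq_one_of_dvd hdvdN
  have : s.den = 1 := by nlinarith
  rw [hn, this]; simp

theorem order_five_double_square (A B : ℤ) (hΔ : 4 * A ^ 3 + 27 * B ^ 2 ≠ 0)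
    (x₁ w₁ x₂ w₂ : ℚ)
    (h₁ : (E A B).Nonsingular x₁ w₁) (h₂ : (E A B).Nonsingular x₂ w₂)
    (hord : addOrderOf (WeierstrassCurve.Affine.Point.some _ _ h₁) = 5)
    (hdbl : 2 • WeierstrassCurve.Affine.Point.some _ _ h₁ = WeierstrassCurve.Affine.Point.some _ _ h₂) :
    ∃ c : ℤ, (c : ℚ) ^ 2 = (2 * x₁ + x₂) * (x₁ + 2 * x₂) := by
  have hnegY : ∀ x y : ℚ, (E A B).negY x y = -y := by
    intro x y; simp [WeierstrassCurve.Affine.negY, E]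
  -- curve equations
  have e1 : w₁^2 = x₁^3 + A*x₁ + B := by
    have h := h₁.left; rw [WeierstrassCurve.Affine.equation_iff] at h
    simp only [E] at h; linear_combination h
  have e2 : w₂^2 = x₂^3 + A*x₂ + B := by
    have h := h₂.left; rw [WeierstrassCurve.Affine.equation_iff] at h
    simp only [E] at h; linear_combination h
  -- w₁ ≠ 0
  have hw₁ : w₁ ≠ 0 := by
    intro h0
    have h2P : (2:ℕ) • WeierstrassCurve.Affine.Point.some _ _ h₁ = 0 := by
      rw [two_nsmul]
      exact WeierstrassCurve.Affine.Point.add_self_of_Y_eq (by rw [hnegY, h0, neg_zero])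
    have hdv : (5:ℕ) ∣ 2 := hord ▸ addOrderOf_dvd_of_nsmul_eq_zero h2P
    norm_num at hdv
  -- 4P = -P
  have h5 : (5:ℕ) • WeierstrassCurve.Affine.Point.some _ _ h₁ = 0 :=
    hord ▸ addOrderOf_nsmul_eq_zero _
  have h4 : (2:ℕ) • WeierstrassCurve.Affine.Point.some _ _ h₂ =
      - WeierstrassCurve.Affine.Point.some _ _ h₁ := by
    rw [← hdbl, smul_smul]
    have h45 : (4:ℕ) • WeierstrassCurve.Affine.Point.some _ _ h₁
        + WeierstrassCurve.Affine.Point.some _ _ h₁ = 0 := by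
      have hs : (5:ℕ) • WeierstrassCurve.Affine.Point.some _ _ h₁
          = (4:ℕ) • WeierstrassCurve.Affine.Point.some _ _ h₁
            + WeierstrassCurve.Affine.Point.some _ _ h₁ := succ_nsmul _ 4
      rw [← hs]; exact h5
    have : (2*2 : ℕ) = 4 := by norm_num
    rw [this]
    exact eq_neg_of_add_eq_zero_left h45
  -- w₂ ≠ 0
  have hw₂ : w₂ ≠ 0 := by
    intro h0
    have h2Q : (2:ℕ) • WeierstrassCurve.Affine.Point.some _ _ h₂ = 0 := by
      rw [two_nsmul]
      exact WeierstrassCurve.Affine.Point.add_self_of_Y_eq (by rw [hnegY, h0, neg_zero])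
    rw [h4, neg_eq_zero] at h2Q
    exact WeierstrassCurve.Affine.Point.some_ne_zero h₁ h2Q
  -- slopes
  have hy₁ : w₁ ≠ (E A B).negY x₁ w₁ := by
    rw [hnegY]; intro h; exact hw₁ (by linarith)
  have hy₂ : w₂ ≠ (E A B).negY x₂ w₂ := by
    rw [hnegY]; intro h; exact hw₂ (by linarith)
  have hs₁ : (E A B).slope x₁ x₁ w₁ w₁ = (3*x₁^2+(A:ℚ))/(2*w₁) := by
    rw [WeierstrassCurve.Affine.slope_of_Y_ne rfl hy₁]
    simp only [WeierstrassCurve.Affine.negY, E]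
    ring_nf
  have hs₂ : (E A B).slope x₂ x₂ w₂ w₂ = (3*x₂^2+(A:ℚ))/(2*w₂) := by
    rw [WeierstrassCurve.Affine.slope_of_Y_ne rfl hy₂]
    simp only [WeierstrassCurve.Affine.negY, E]
    ring_nf
  have haddX : ∀ x L : ℚ, (E A B).addX x x L = L^2 - 2*x := by
    intro x L; simp [WeierstrassCurve.Affine.addX, E]; ring
  -- doubling of P : x-coordinate relation
  have hP2 : WeierstrassCurve.Affine.Point.some _ _ h₂ =
      WeierstrassCurve.Affine.Point.some _ _
        (WeierstrassCurve.Affine.nonsingular_add h₁ h₁ (fun h => hy₁ h.2)) := by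
    rw [← hdbl, two_nsmul]
    exact WeierstrassCurve.Affine.Point.add_self_of_Y_ne hy₁
  obtain ⟨hX1, -⟩ := WeierstrassCurve.Affine.Point.some.inj hP2
  rw [haddX, hs₁] at hX1
  -- doubling of Q : x-coordinate relation
  have hQ2 : WeierstrassCurve.Affine.Point.some _ _
      (WeierstrassCurve.Affine.nonsingular_add h₂ h₂ (fun h => hy₂ h.2)) =
      WeierstrassCurve.Affine.Point.some _ _ ((WeierstrassCurve.Affine.nonsingular_neg _ _).mpr h₁) := by
    rw [← WeierstrassCurve.Affine.Point.add_self_of_Y_ne hy₂, ← two_nsmul, h4]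
    rfl
    exact h₂
  obtain ⟨hX2, -⟩ := WeierstrassCurve.Affine.Point.some.inj hQ2
  rw [haddX, hs₂] at hX2
  -- key quadratic identities
  have hq1 : 2*x₁ + x₂ = ((3*x₁^2+(A:ℚ))/(2*w₁))^2 := by linear_combination hX1
  have hq2 : x₁ + 2*x₂ = ((3*x₂^2+(A:ℚ))/(2*w₂))^2 := by linear_combination -hX2
  have hw₁' : (2*w₁) ≠ 0 := by simpa using hw₁
  have hw₂' : (2*w₂) ≠ 0 := by simpa using hw₂
  have g1 : (3*x₁^2+(A:ℚ))^2 = 4*(2*x₁+x₂)*(x₁^3+(A:ℚ)*x₁+(B:ℚ)) := by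
    rw [← e1]
    field_simp at hq1
    linear_combination -hq1
  have g2 : (3*x₂^2+(A:ℚ))^2 = 4*(x₁+2*x₂)*(x₂^3+(A:ℚ)*x₂+(B:ℚ)) := by
    rw [← e2]
    field_simp at hq2
    linear_combination -hq2
  -- integrality of x-coordinates
  have hd1 : x₁.den = 1 := den_eq_one_aux A B x₁ x₂ g1 g2
  have hd2 : x₂.den = 1 := den_eq_one_aux A B x₂ x₁ (by linear_combination g2) (by linear_combination g1)
  have hi1 : ((x₁.num:ℚ)) = x₁ := by
    have := Rat.num_div_den x₁; rw [hd1] at this; simpa using this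
  have hi2 : ((x₂.num:ℚ)) = x₂ := by
    have := Rat.num_div_den x₂; rw [hd2] at this; simpa using this
  -- product is an integer
  set m : ℤ := (2*x₁.num + x₂.num) * (x₁.num + 2*x₂.num) with hm
  have hmq : (2 * x₁ + x₂) * (x₁ + 2 * x₂) = (m:ℚ) := by
    rw [hm]; push_cast; rw [hi1, hi2]
  -- the square root
  set s : ℚ := ((3*x₁^2+(A:ℚ))/(2*w₁)) * ((3*x₂^2+(A:ℚ))/(2*w₂)) with hsdef
  have hsq : s^2 = (m:ℚ) := by
    rw [← hmq, hsdef, mul_pow, ← hq1, ← hq2]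
  have hint : ((s.num:ℚ)) = s := num_cast_of_sq_int s m hsq
  refine ⟨s.num, ?_⟩
  rw [hint, hsq, hmq]
end

section
/- Let E : Y² = X³ + A·X + B be an elliptic curve with A, B ∈ ℤ and 4A³ + 27B² ≠ 0, let P = (x₁, w₁) ∈ E(ℚ) be a point of order 5, and let (x₂, w₂) = [2]P. Then 4B = (x₁ + x₂)·(x₁² − 4x₁x₂ + x₂² − 2A) and A² + (2x₁² + 2x₁x₂ + 2x₂²)·A − x₁⁴ + x₁³x₂ + 9x₁²x₂² + x₁x₂³ − x₂⁴ = 0. -/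
open WeierstrassCurve.Affine

theorem order_five_relations (A B : ℤ) (hΔ : 4 * A ^ 3 + 27 * B ^ 2 ≠ 0)
    (x₁ w₁ x₂ w₂ : ℚ)
    (h₁ : (E A B).Nonsingular x₁ w₁) (h₂ : (E A B).Nonsingular x₂ w₂)
    (hord : addOrderOf (WeierstrassCurve.Affine.Point.some _ _ h₁) = 5)
    (hdbl : 2 • WeierstrassCurve.Affine.Point.some _ _ h₁ = WeierstrassCurve.Affine.Point.some _ _ h₂) :
    4 * (B : ℚ) = (x₁ + x₂) * (x₁ ^ 2 - 4 * x₁ * x₂ + x₂ ^ 2 - 2 * A) ∧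
      (A : ℚ) ^ 2 + (2 * x₁ ^ 2 + 2 * x₁ * x₂ + 2 * x₂ ^ 2) * A
        - x₁ ^ 4 + x₁ ^ 3 * x₂ + 9 * x₁ ^ 2 * x₂ ^ 2 + x₁ * x₂ ^ 3 - x₂ ^ 4 = 0 := by
  have h5 : 5 • Point.some _ _ h₁ = 0 := hord ▸ addOrderOf_nsmul_eq_zero _
  have hw₁ : w₁ ≠ (E A B).negY x₁ w₁ := by
    intro h
    have h0 : 2 • Point.some _ _ h₁ = 0 := by
      rw [two_nsmul]; exact Point.add_self_of_Y_eq h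
    have := addOrderOf_dvd_of_nsmul_eq_zero h0
    rw [hord] at this; omega
  have hQ : 2 • Point.some _ _ h₂ = -Point.some _ _ h₁ := by
    rw [← hdbl, smul_smul]
    have : (2 * 2 : ℕ) • Point.some _ _ h₁ + Point.some _ _ h₁ = 0 := by
      rw [← succ_nsmul]; exact h5
    exact eq_neg_of_add_eq_zero_left this
  have hw₂ : w₂ ≠ (E A B).negY x₂ w₂ := by
    intro h
    have h0 : 2 • Point.some _ _ h₂ = 0 := by
      rw [two_nsmul]; exact Point.add_self_of_Y_eq h
    rw [hQ, neg_eq_zero] at h0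
    exact Point.some_ne_zero h₁ h0
  have hne : x₁ ≠ x₂ := by
    intro hx
    rcases Y_eq_of_X_eq h₁.1 h₂.1 hx with hy | hy
    · have he : Point.some _ _ h₂ = Point.some _ _ h₁ := by subst hx; subst hy; rfl
      rw [he, two_nsmul, add_eq_right] at hdbl
      exact Point.some_ne_zero h₁ hdbl
    · have he : Point.some _ _ h₁ = -Point.some _ _ h₂ := by
        rw [Point.neg_some]; subst hx; subst hy; rfl
      have he' : Point.some _ _ h₂ = -Point.some _ _ h₁ := by rw [he, neg_neg]
      rw [he'] at hdbl
      have h3 : (3 : ℕ) • Point.some _ _ h₁ = 0 := by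
        rw [show (3 : ℕ) = 2 + 1 from rfl, add_nsmul, one_nsmul, hdbl, neg_add_cancel]
      have := addOrderOf_dvd_of_nsmul_eq_zero h3
      rw [hord] at this; omega
  rw [two_nsmul, Point.add_of_Y_ne hw₁] at hdbl
  have hx2 : (E A B).addX x₁ x₁ ((E A B).slope x₁ x₁ w₁ w₁) = x₂ := (Point.some.inj hdbl).left
  rw [two_nsmul, Point.add_of_Y_ne hw₂, Point.neg_some] at hQ
  have hx1 : (E A B).addX x₂ x₂ ((E A B).slope x₂ x₂ w₂ w₂) = x₁ := (Point.some.inj hQ).left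
  have hc₁ : w₁ ^ 2 = x₁ ^ 3 + (A:ℚ) * x₁ + B := by
    have := h₁.1; rw [equation_iff] at this; simpa [E] using this
  have hc₂ : w₂ ^ 2 = x₂ ^ 3 + (A:ℚ) * x₂ + B := by
    have := h₂.1; rw [equation_iff] at this; simpa [E] using this
  have hw₁0 : w₁ ≠ 0 := by
    simp only [negY, E] at hw₁; intro h; apply hw₁; rw [h]; ring
  have hw₂0 : w₂ ≠ 0 := by
    simp only [negY, E] at hw₂; intro h; apply hw₂; rw [h]; ring
  rw [slope_of_Y_ne rfl hw₁] at hx2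
  rw [slope_of_Y_ne rfl hw₂] at hx1
  simp only [addX, negY, E] at hx2 hx1
  field_simp [hw₁0] at hx2
  field_simp [hw₂0] at hx1
  have e1 : (A:ℚ)^2 - 2*A*x₁^2 - 4*A*x₁*x₂ + x₁^4 - 4*x₁^3*x₂ - 8*B*x₁ - 4*B*x₂ = 0 := by
    linear_combination hx2 + (8*x₁ + 4*x₂) * hc₁
  have e2 : (A:ℚ)^2 - 2*A*x₂^2 - 4*A*x₁*x₂ + x₂^4 - 4*x₁*x₂^3 - 8*B*x₂ - 4*B*x₁ = 0 := by
    linear_combination hx1 + (8*x₂ + 4*x₁) * hc₂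
  have key : (x₁ - x₂) * (4*B - (x₁ + x₂) * (x₁^2 - 4*x₁*x₂ + x₂^2 - 2*A)) = 0 := by
    linear_combination e2 - e1
  have g1 : 4 * (B:ℚ) = (x₁ + x₂) * (x₁^2 - 4*x₁*x₂ + x₂^2 - 2*A) := by
    rcases mul_eq_zero.mp key with h | h
    · exact absurd (sub_eq_zero.mp h) hne
    · linarith [sub_eq_zero.mp h]
  refine ⟨g1, ?_⟩
  linear_combination (1/2) * e1 + (1/2) * e2 + (3/2) * (x₁ + x₂) * g1
end
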